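/- Let d ∈ ℕ and t > 0. For every n ∈ ℕ, every z₁, …, z_n ∈ ℂ^d, w₁, …, w_n ∈ ℝ and c₁, …, c_n ∈ ℂ, the sum Σ_{i=1}^{n} Σ_{j=1}^{n} c_i · conj(c_j) · exp(t(−i(w_i − w_j − Im⟨z_i, z_j⟩) − |z_i − z_j|²/2)) is a nonnegative real number. (Equivalently: the function exp(tψ), with ψ(z,w) = −iw − |z|²/2, is positive definite on the Heisenberg group H = ℂ^d × ℝ with multiplication (z,w)(z′,w′) = (z+z′, w+w′+Im⟨z′,z⟩), for which (z,w)^{−1} = (−z,−w) and (z_j,w_j)^{−1}(z_i,w_i) = (z_i−z_j, w_i−w_j−Im⟨z_i,z_j⟩).) -/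

import Mathlib

open Complex Finset
open scoped Nat

lemma pow_kernel_nonneg (d n k : ℕ) (z : Fin n → EuclideanSpace ℂ (Fin d))
    (a : Fin n → ℂ) :
    ∃ r : ℝ, 0 ≤ r ∧
      ∑ i : Fin n, ∑ j : Fin n,
        a i * (starRingEnd ℂ) (a j) * (inner ℂ (z i) (z j) : ℂ) ^ k = (r : ℂ) := by
  have h1 : ∀ i j : Fin n, (inner ℂ (z i) (z j) : ℂ) ^ k
      = ∑ p : Fin k → Fin d,
          ((starRingEnd ℂ) (∏ m, z i (p m)) * ∏ m, z j (p m)) := by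
    intro i j
    rw [PiLp.inner_apply]
    simp only [RCLike.inner_apply]
    rw [Fintype.sum_pow]
    refine Finset.sum_congr rfl fun p _ => ?_
    rw [map_prod, ← Finset.prod_mul_distrib]
    exact Finset.prod_congr rfl fun _ _ => mul_comm _ _
  set T : (Fin k → Fin d) → ℂ :=
    fun p => ∑ i, a i * (starRingEnd ℂ) (∏ m, z i (p m)) with hT
  have hTp : ∀ p, T p * (starRingEnd ℂ) (T p)
      = ∑ i : Fin n, ∑ j : Fin n, a i * (starRingEnd ℂ) (a j) *
          ((starRingEnd ℂ) (∏ m, z i (p m)) * ∏ m, z j (p m)) := by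
    intro p
    rw [hT, map_sum, Finset.sum_mul_sum]
    refine Finset.sum_congr rfl fun i _ => Finset.sum_congr rfl fun j _ => ?_
    simp only [map_mul, RingHomInvPair.comp_apply_eq, starRingEnd_self_apply]
    ring
  have key : ∑ i : Fin n, ∑ j : Fin n,
      a i * (starRingEnd ℂ) (a j) * (inner ℂ (z i) (z j) : ℂ) ^ k
      = ∑ p : Fin k → Fin d, T p * (starRingEnd ℂ) (T p) := by
    simp only [h1]
    simp_rw [Finset.mul_sum, hTp]
    exact (Finset.sum_congr rfl fun i _ => Finset.sum_comm).trans Finset.sum_comm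
  refine ⟨∑ p : Fin k → Fin d, Complex.normSq (T p),
    Finset.sum_nonneg fun p _ => Complex.normSq_nonneg _, ?_⟩
  rw [key]
  push_cast
  exact Finset.sum_congr rfl fun p _ => (Complex.mul_conj (T p))

lemma exp_kernel_nonneg (d n : ℕ) (t : ℝ) (ht : 0 ≤ t)
    (z : Fin n → EuclideanSpace ℂ (Fin d)) (a : Fin n → ℂ) :
    ∃ r : ℝ, 0 ≤ r ∧
      ∑ i : Fin n, ∑ j : Fin n,
        a i * (starRingEnd ℂ) (a j) *
          Complex.exp ((t : ℂ) * (inner ℂ (z i) (z j) : ℂ)) = (r : ℂ) := by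
  set S : ℂ := ∑ i : Fin n, ∑ j : Fin n,
      a i * (starRingEnd ℂ) (a j) *
        Complex.exp ((t : ℂ) * (inner ℂ (z i) (z j) : ℂ)) with hSdef
  have hexp : ∀ x : ℂ, HasSum (fun k : ℕ => x ^ k / (k ! : ℂ)) (Complex.exp x) := by
    intro x
    rw [Complex.exp_eq_exp_ℂ]
    exact NormedSpace.expSeries_div_hasSum_exp x
  have hS : HasSum
      (fun k : ℕ => ∑ i : Fin n, ∑ j : Fin n,
        a i * (starRingEnd ℂ) (a j) *
          (((t : ℂ) * (inner ℂ (z i) (z j) : ℂ)) ^ k / (k ! : ℂ))) S := by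
    refine hasSum_sum fun i _ => hasSum_sum fun j _ => ?_
    exact (hexp _).mul_left _
  have hk : ∀ k : ℕ, ∃ ρ : ℝ, 0 ≤ ρ ∧
      ∑ i : Fin n, ∑ j : Fin n,
        a i * (starRingEnd ℂ) (a j) *
          (((t : ℂ) * (inner ℂ (z i) (z j) : ℂ)) ^ k / (k ! : ℂ)) = (ρ : ℂ) := by
    intro k
    obtain ⟨r, hr0, hr⟩ := pow_kernel_nonneg d n k z a
    refine ⟨t ^ k / (k ! : ℝ) * r, by positivity, ?_⟩
    have h2 : ∀ i j : Fin n,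
        a i * (starRingEnd ℂ) (a j) *
          (((t : ℂ) * (inner ℂ (z i) (z j) : ℂ)) ^ k / (k ! : ℂ))
        = (((t ^ k / (k ! : ℝ) : ℝ)) : ℂ) *
            (a i * (starRingEnd ℂ) (a j) * (inner ℂ (z i) (z j) : ℂ) ^ k) := by
      intro i j
      push_cast
      ring
    simp_rw [h2, ← Finset.mul_sum]
    rw [hr]
    push_cast
    ring
  choose ρ hρ0 hρ using hk
  have hS' : HasSum (fun k : ℕ => ((ρ k : ℝ) : ℂ)) S := by
    simpa only [hρ] using hS
  have hre : HasSum ρ S.re := by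
    simpa using Complex.hasSum_re hS'
  have him : S.im = 0 := by
    have h := Complex.hasSum_im hS'
    simp only [Complex.ofReal_im] at h
    exact (h.unique hasSum_zero).symm ▸ rfl
  refine ⟨S.re, ?_, ?_⟩
  · rw [← hre.tsum_eq]
    exact tsum_nonneg hρ0
  · exact Complex.ext (by simp) (by simp [him])

theorem heisenberg_exp_psi_posdef
    (d : ℕ) (t : ℝ) (ht : 0 < t) (n : ℕ)
    (z : Fin n → EuclideanSpace ℂ (Fin d)) (w : Fin n → ℝ) (c : Fin n → ℂ) :
    ∃ r : ℝ, 0 ≤ r ∧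
      ∑ i : Fin n, ∑ j : Fin n,
          c i * (starRingEnd ℂ) (c j) *
            Complex.exp ((t : ℂ) *
              (-Complex.I *
                  ((w i : ℂ) - (w j : ℂ) -
                    (((inner ℂ (z i) (z j) : ℂ).im : ℝ) : ℂ)) -
                ((‖z i - z j‖ : ℝ) : ℂ) ^ 2 / 2)) = (r : ℂ) := by
  set a : Fin n → ℂ := fun i =>
    c i * Complex.exp ((t : ℂ) * (-Complex.I * (w i : ℂ) - ((‖z i‖ : ℝ) : ℂ) ^ 2 / 2))
    with ha
  obtain ⟨r, hr0, hr⟩ := exp_kernel_nonneg d n t ht.le z a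
  refine ⟨r, hr0, ?_⟩
  rw [← hr]
  refine Finset.sum_congr rfl fun i _ => Finset.sum_congr rfl fun j _ => ?_
  have hnorm : ((‖z i - z j‖ : ℝ) : ℂ) ^ 2
      = ((‖z i‖ : ℝ) : ℂ) ^ 2 - 2 * (((inner ℂ (z i) (z j) : ℂ).re : ℝ) : ℂ)
        + ((‖z j‖ : ℝ) : ℂ) ^ 2 := by
    have h := @norm_sub_sq ℂ (EuclideanSpace ℂ (Fin d)) _ _ _ (z i) (z j)
    have h' : (‖z i - z j‖ : ℝ) ^ 2
        = ‖z i‖ ^ 2 - 2 * (inner ℂ (z i) (z j) : ℂ).re + ‖z j‖ ^ 2 := by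
      simpa using h
    exact_mod_cast congrArg (Complex.ofReal) h'
  have hp : (inner ℂ (z i) (z j) : ℂ)
      = (((inner ℂ (z i) (z j) : ℂ).re : ℝ) : ℂ)
        + (((inner ℂ (z i) (z j) : ℂ).im : ℝ) : ℂ) * Complex.I :=
    (Complex.re_add_im _).symm
  have hX : (starRingEnd ℂ) ((t : ℂ) * (-Complex.I * (w j : ℂ) - ((‖z j‖ : ℝ) : ℂ) ^ 2 / 2))
      = (t : ℂ) * (Complex.I * (w j : ℂ) - ((‖z j‖ : ℝ) : ℂ) ^ 2 / 2) := by
    simp [map_mul, map_sub, map_neg, Complex.conj_I, Complex.conj_ofReal, map_div₀, map_pow,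
      map_ofNat]
  have hsplit : a i * (starRingEnd ℂ) (a j) * Complex.exp ((t : ℂ) * (inner ℂ (z i) (z j) : ℂ))
      = c i * (starRingEnd ℂ) (c j) *
          Complex.exp
            ((t : ℂ) * (-Complex.I * (w i : ℂ) - ((‖z i‖ : ℝ) : ℂ) ^ 2 / 2)
              + (t : ℂ) * (Complex.I * (w j : ℂ) - ((‖z j‖ : ℝ) : ℂ) ^ 2 / 2)
              + (t : ℂ) * (inner ℂ (z i) (z j) : ℂ)) := by
    rw [ha]
    simp only [map_mul, ← Complex.exp_conj, hX, Complex.exp_add]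
    ring
  have hexpo : (t : ℂ) *
        (-Complex.I * ((w i : ℂ) - (w j : ℂ) - (((inner ℂ (z i) (z j) : ℂ).im : ℝ) : ℂ)) -
          ((‖z i - z j‖ : ℝ) : ℂ) ^ 2 / 2)
      = (t : ℂ) * (-Complex.I * (w i : ℂ) - ((‖z i‖ : ℝ) : ℂ) ^ 2 / 2)
          + (t : ℂ) * (Complex.I * (w j : ℂ) - ((‖z j‖ : ℝ) : ℂ) ^ 2 / 2)
          + (t : ℂ) * (inner ℂ (z i) (z j) : ℂ) := by
    rw [hnorm]
    conv_rhs => rw [hp]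
    ring
  rw [hsplit, hexpo]
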